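/- Let 0 and 1 be distinct transaction identifiers, x an address, and 0, 1 distinct values. The history h4 = ⟨TXBegin_0, ret(TXBegin)_0, TXWrite_0(x,1), ret(TXWrite)_0, TXCommit_0, TXBegin_1, ret(TXBegin)_1, TXRead_1(x), ret(TXCommit)_0, ret(TXRead)_1(0), TXRead_1(x), ret(TXRead)_1(0)⟩ is a member of hist(RO-NORec-CGA) but not a member of hist(NORec-CGA). -/

import Mathlib

namespace TM

/-- Events of a TM implementation: invocations and responses. -/
inductive Event (T A V : Type) where
  | invBegin  (t : T)
  | invCommit (t : T)
  | invRead   (t : T) (a : A)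
  | invWrite  (t : T) (a : A) (v : V)
  | respBegin  (t : T)
  | respCommit (t : T)
  | respRead   (t : T) (v : V)
  | respWrite  (t : T)
  | respAbort  (t : T)
  deriving DecidableEq

end TM

namespace TM

/-- Per-transaction control state for NORec-CGA / RO-NORec-CGA. -/
inductive NPc (A V : Type) where
  | notStarted | beginPending | beginResp
  | ready
  | readPending (a : A) | readResp (v : V)
  | writePending (a : A) (v : V) | writeResp
  | commitPending | commitResp
  | abortResp
  | committed | aborted

/-- State of NORec-CGA / RO-NORec-CGA. -/
structure NState (T A V : Type) where
  mem : A → V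
  rdSet : T → A → Option V
  wrSet : T → A → Option V
  pc : T → NPc A V

/-- `f ⊆ σ`: the memory `σ` agrees with the partial map `f` on its domain. -/
def Agrees {A V : Type} (f : A → Option V) (σ : A → V) : Prop :=
  ∀ a v, f a = some v → σ a = v

variable {T A V : Type} [DecidableEq T] [DecidableEq A] [Zero V]

/-- Steps of NORec-CGA (`ro = false`) and RO-NORec-CGA (`ro = true`): each
operation emits its invocation event, later executes its body in one atomic
(silent) step, and finally emits its response event.  The only difference
between the two systems is that in RO-NORec, a read of an address already in
the read set returns the read-set value without validation. -/
inductive NStep (ro : Bool) : NState T A V → Option (Event T A V) → NState T A V → Prop where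
  | invBegin (s : NState T A V) (t : T) : s.pc t = .notStarted →
      NStep ro s (some (.invBegin t)) { s with pc := Function.update s.pc t .beginPending }
  | doBegin (s : NState T A V) (t : T) : s.pc t = .beginPending →
      NStep ro s none { s with pc := Function.update s.pc t .beginResp }
  | respBegin (s : NState T A V) (t : T) : s.pc t = .beginResp →
      NStep ro s (some (.respBegin t)) { s with pc := Function.update s.pc t .ready }
  | invWrite (s : NState T A V) (t : T) (a : A) (v : V) : s.pc t = .ready →
      NStep ro s (some (.invWrite t a v))
        { s with pc := Function.update s.pc t (.writePending a v) }
  | doWrite (s : NState T A V) (t : T) (a : A) (v : V) :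
      s.pc t = .writePending a v →
      NStep ro s none
        { s with wrSet := Function.update s.wrSet t (Function.update (s.wrSet t) a (some v)),
                 pc := Function.update s.pc t .writeResp }
  | respWrite (s : NState T A V) (t : T) : s.pc t = .writeResp →
      NStep ro s (some (.respWrite t)) { s with pc := Function.update s.pc t .ready }
  | invRead (s : NState T A V) (t : T) (a : A) : s.pc t = .ready →
      NStep ro s (some (.invRead t a)) { s with pc := Function.update s.pc t (.readPending a) }
  | doReadWrSet (s : NState T A V) (t : T) (a : A) (v : V) :
      s.pc t = .readPending a → s.wrSet t a = some v →
      NStep ro s none { s with pc := Function.update s.pc t (.readResp v) }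
  | doReadRdSet (s : NState T A V) (t : T) (a : A) (v : V) :
      ro = true → s.pc t = .readPending a → s.wrSet t a = none → s.rdSet t a = some v →
      NStep ro s none { s with pc := Function.update s.pc t (.readResp v) }
  | doReadMem (s : NState T A V) (t : T) (a : A) :
      s.pc t = .readPending a → s.wrSet t a = none →
      (ro = true → s.rdSet t a = none) → Agrees (s.rdSet t) s.mem →
      NStep ro s none
        { s with rdSet := Function.update s.rdSet t
                            (Function.update (s.rdSet t) a (some (s.mem a))),
                 pc := Function.update s.pc t (.readResp (s.mem a)) }
  | doReadAbort (s : NState T A V) (t : T) (a : A) :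
      s.pc t = .readPending a → s.wrSet t a = none →
      (ro = true → s.rdSet t a = none) → ¬ Agrees (s.rdSet t) s.mem →
      NStep ro s none { s with pc := Function.update s.pc t .abortResp }
  | respRead (s : NState T A V) (t : T) (v : V) : s.pc t = .readResp v →
      NStep ro s (some (.respRead t v)) { s with pc := Function.update s.pc t .ready }
  | invCommit (s : NState T A V) (t : T) : s.pc t = .ready →
      NStep ro s (some (.invCommit t)) { s with pc := Function.update s.pc t .commitPending }
  | doCommitReadOnly (s : NState T A V) (t : T) :
      s.pc t = .commitPending → (∀ a, s.wrSet t a = none) →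
      NStep ro s none { s with pc := Function.update s.pc t .commitResp }
  | doCommitWriter (s : NState T A V) (t : T) :
      s.pc t = .commitPending → (∃ a v, s.wrSet t a = some v) →
      Agrees (s.rdSet t) s.mem →
      NStep ro s none { s with mem := fun a => (s.wrSet t a).getD (s.mem a),
                               pc := Function.update s.pc t .commitResp }
  | doCommitAbort (s : NState T A V) (t : T) :
      s.pc t = .commitPending → (∃ a v, s.wrSet t a = some v) →
      ¬ Agrees (s.rdSet t) s.mem →
      NStep ro s none { s with pc := Function.update s.pc t .abortResp }
  | respCommit (s : NState T A V) (t : T) : s.pc t = .commitResp →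
      NStep ro s (some (.respCommit t)) { s with pc := Function.update s.pc t .committed }
  | respAbort (s : NState T A V) (t : T) : s.pc t = .abortResp →
      NStep ro s (some (.respAbort t)) { s with pc := Function.update s.pc t .aborted }

/-- Initial states: memory constantly `0`, empty read/write sets, all
transactions not started. -/
def NInit (s : NState T A V) : Prop :=
  s.mem = (fun _ => (0 : V)) ∧ s.rdSet = (fun _ _ => none) ∧
  s.wrSet = (fun _ _ => none) ∧ s.pc = (fun _ => NPc.notStarted)

/-- Executions, carrying the history of emitted events. -/
inductive NExec (ro : Bool) : NState T A V → List (Event T A V) → Prop where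
  | init (s : NState T A V) : NInit s → NExec ro s []
  | silent (s : NState T A V) (h : List (Event T A V)) (s' : NState T A V) :
      NExec ro s h → NStep ro s none s' → NExec ro s' h
  | emit (s : NState T A V) (h : List (Event T A V)) (e : Event T A V)
      (s' : NState T A V) :
      NExec ro s h → NStep ro s (some e) s' → NExec ro s' (h ++ [e])

end TM

/-- `hist(NORec-CGA)`: histories generated by executions of NORec-CGA. -/
def TM.NorecHist (T A V : Type) [DecidableEq T] [DecidableEq A] [Zero V] :
    Set (List (TM.Event T A V)) :=
  { h | ∃ s : TM.NState T A V, TM.NExec false s h }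

/-- `hist(RO-NORec-CGA)`: histories generated by executions of RO-NORec-CGA. -/
def TM.RoNorecHist (T A V : Type) [DecidableEq T] [DecidableEq A] [Zero V] :
    Set (List (TM.Event T A V)) :=
  { h | ∃ s : TM.NState T A V, TM.NExec true s h }

namespace TM
variable {T A V : Type} [DecidableEq T] [DecidableEq A] [Zero V]

lemma mem_part (t0 t1 : T) (x : A) (v1 : V) (hne : t0 ≠ t1) :
    ∃ s : NState T A V, NExec true s
      [.invBegin t0, .respBegin t0, .invWrite t0 x v1, .respWrite t0,
       .invCommit t0, .invBegin t1, .respBegin t1, .invRead t1 x,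
       .respCommit t0, .respRead t1 (0 : V), .invRead t1 x, .respRead t1 (0:V)] := by
  have hne' : t1 ≠ t0 := hne.symm
  have h0 : NExec (T:=T) (A:=A) (V:=V) true ⟨fun _ => 0, fun _ _ => none, fun _ _ => none, fun _ => .notStarted⟩ [] :=
    .init _ ⟨rfl, rfl, rfl, rfl⟩
  have h1 := NExec.emit _ _ _ _ h0 (NStep.invBegin _ t0 rfl)
  have h2 := NExec.silent _ _ _ h1 (NStep.doBegin _ t0 (by simp [Function.update_apply]))
  have h3 := NExec.emit _ _ _ _ h2 (NStep.respBegin _ t0 (by simp [Function.update_apply]))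
  have h4 := NExec.emit _ _ _ _ h3 (NStep.invWrite _ t0 x v1 (by simp [Function.update_apply]))
  have h5 := NExec.silent _ _ _ h4 (NStep.doWrite _ t0 x v1 (by simp [Function.update_apply]))
  have h6 := NExec.emit _ _ _ _ h5 (NStep.respWrite _ t0 (by simp [Function.update_apply]))
  have h7 := NExec.emit _ _ _ _ h6 (NStep.invCommit _ t0 (by simp [Function.update_apply]))
  have h8 := NExec.emit _ _ _ _ h7 (NStep.invBegin _ t1 (by simp [Function.update_apply, hne']))
  have h9 := NExec.silent _ _ _ h8 (NStep.doBegin _ t1 (by simp [Function.update_apply]))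
  have h10 := NExec.emit _ _ _ _ h9 (NStep.respBegin _ t1 (by simp [Function.update_apply]))
  have h11 := NExec.emit _ _ _ _ h10 (NStep.invRead _ t1 x (by simp [Function.update_apply]))
  have h12 := NExec.silent _ _ _ h11 (NStep.doReadMem _ t1 x
    (by simp [Function.update_apply]) (by simp [Function.update_apply, hne'])
    (fun _ => rfl) (fun a v h => by simp at h))
  have h13 := NExec.silent _ _ _ h12 (NStep.doCommitWriter _ t0
    (by simp [Function.update_apply, hne])
    ⟨x, v1, by simp [Function.update_apply, hne]⟩
    (fun a v h => by simp [Function.update_apply, hne] at h))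
  have h14 := NExec.emit _ _ _ _ h13 (NStep.respCommit _ t0 (by simp [Function.update_apply]))
  have h15 := NExec.emit _ _ _ _ h14 (NStep.respRead _ t1 0 (by simp [Function.update_apply, hne']))
  have h16 := NExec.emit _ _ _ _ h15 (NStep.invRead _ t1 x (by simp [Function.update_apply]))
  have h17 := NExec.silent _ _ _ h16 (NStep.doReadRdSet _ t1 x 0 rfl
    (by simp [Function.update_apply]) (by simp [Function.update_apply, hne'])
    (by simp [Function.update_apply]))
  have h18 := NExec.emit _ _ _ _ h17 (NStep.respRead _ t1 0 (by simp [Function.update_apply]))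
  simp only [List.nil_append, List.cons_append, List.singleton_append] at h18
  exact ⟨_, h18⟩

end TM
namespace TM
variable {T A V : Type} [DecidableEq T] [DecidableEq A] [Zero V]

lemma agrees_empty (σ : A → V) : Agrees (fun _ => none) σ := fun _ v h => by cases h

/-- Common invariant: other transactions never start, `t1` never writes,
`t0` never reads. -/
def Cmn (t0 t1 : T) (s : NState T A V) : Prop :=
  (∀ t, t ≠ t0 → t ≠ t1 → s.pc t = .notStarted) ∧
  s.wrSet t1 = (fun _ => none) ∧ s.rdSet t0 = (fun _ => none)

def Wm (x : A) (v1 : V) : A → Option V := Function.update (fun _ => none) x (some v1)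
def R0m (x : A) : A → Option V := Function.update (fun _ => none) x (some (0 : V))

def I0 (t0 t1 : T) (x : A) (v1 : V) (s : NState T A V) : Prop := Cmn t0 t1 s ∧ s.mem x = 0 ∧
  s.wrSet t0 = (fun _ => none) ∧ s.rdSet t1 = (fun _ => none) ∧
  s.pc t0 = .notStarted ∧ s.pc t1 = .notStarted
def I1 (t0 t1 : T) (x : A) (v1 : V) (s : NState T A V) : Prop := Cmn t0 t1 s ∧ s.mem x = 0 ∧
  s.wrSet t0 = (fun _ => none) ∧ s.rdSet t1 = (fun _ => none) ∧
  (s.pc t0 = .beginPending ∨ s.pc t0 = .beginResp) ∧ s.pc t1 = .notStarted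
def I2 (t0 t1 : T) (x : A) (v1 : V) (s : NState T A V) : Prop := Cmn t0 t1 s ∧ s.mem x = 0 ∧
  s.wrSet t0 = (fun _ => none) ∧ s.rdSet t1 = (fun _ => none) ∧
  s.pc t0 = .ready ∧ s.pc t1 = .notStarted
def I3 (t0 t1 : T) (x : A) (v1 : V) (s : NState T A V) : Prop := Cmn t0 t1 s ∧ s.mem x = 0 ∧
  s.rdSet t1 = (fun _ => none) ∧ s.pc t1 = .notStarted ∧
  ((s.pc t0 = .writePending x v1 ∧ s.wrSet t0 = (fun _ => none)) ∨
   (s.pc t0 = .writeResp ∧ s.wrSet t0 = Wm x v1))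
def I4 (t0 t1 : T) (x : A) (v1 : V) (s : NState T A V) : Prop := Cmn t0 t1 s ∧ s.mem x = 0 ∧
  s.rdSet t1 = (fun _ => none) ∧ s.pc t1 = .notStarted ∧
  s.pc t0 = .ready ∧ s.wrSet t0 = Wm x v1
def D5 (t0 : T) (x : A) (v1 : V) (s : NState T A V) : Prop :=
  (s.pc t0 = .commitPending ∧ s.mem x = 0) ∨ (s.pc t0 = .commitResp ∧ s.mem x = v1)
def I5 (t0 t1 : T) (x : A) (v1 : V) (s : NState T A V) : Prop := Cmn t0 t1 s ∧ s.rdSet t1 = (fun _ => none) ∧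
  s.pc t1 = .notStarted ∧ s.wrSet t0 = Wm x v1 ∧ D5 t0 x v1 s
def I6 (t0 t1 : T) (x : A) (v1 : V) (s : NState T A V) : Prop := Cmn t0 t1 s ∧ s.rdSet t1 = (fun _ => none) ∧
  (s.pc t1 = .beginPending ∨ s.pc t1 = .beginResp) ∧ s.wrSet t0 = Wm x v1 ∧ D5 t0 x v1 s
def I7 (t0 t1 : T) (x : A) (v1 : V) (s : NState T A V) : Prop := Cmn t0 t1 s ∧ s.rdSet t1 = (fun _ => none) ∧
  s.pc t1 = .ready ∧ s.wrSet t0 = Wm x v1 ∧ D5 t0 x v1 s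
def I8 (t0 t1 : T) (x : A) (v1 : V) (s : NState T A V) : Prop := Cmn t0 t1 s ∧ s.wrSet t0 = Wm x v1 ∧
  ((s.pc t0 = .commitPending ∧ s.mem x = 0 ∧
      ((s.pc t1 = .readPending x ∧ s.rdSet t1 = (fun _ => none)) ∨
       (s.pc t1 = .readResp 0 ∧ s.rdSet t1 = R0m x))) ∨
   (s.pc t0 = .commitResp ∧ s.mem x = v1 ∧
      ((s.pc t1 = .readPending x ∧ s.rdSet t1 = (fun _ => none)) ∨
       (s.pc t1 = .readResp v1 ∧ s.rdSet t1 = Wm x v1) ∨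
       (s.pc t1 = .readResp 0 ∧ s.rdSet t1 = R0m x))))
def I9 (t0 t1 : T) (x : A) (v1 : V) (s : NState T A V) : Prop := Cmn t0 t1 s ∧ s.wrSet t0 = Wm x v1 ∧
  s.pc t0 = .committed ∧ s.mem x = v1 ∧
  ((s.pc t1 = .readPending x ∧ s.rdSet t1 = (fun _ => none)) ∨
   (s.pc t1 = .readResp v1 ∧ s.rdSet t1 = Wm x v1) ∨
   (s.pc t1 = .readResp 0 ∧ s.rdSet t1 = R0m x))
def I10 (t0 t1 : T) (x : A) (v1 : V) (s : NState T A V) : Prop := Cmn t0 t1 s ∧ s.pc t0 = .committed ∧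
  s.mem x = v1 ∧ s.pc t1 = .ready ∧ s.rdSet t1 = R0m x
def I11 (t0 t1 : T) (x : A) (v1 : V) (s : NState T A V) : Prop := Cmn t0 t1 s ∧ s.pc t0 = .committed ∧
  s.mem x = v1 ∧ s.rdSet t1 = R0m x ∧
  (s.pc t1 = .readPending x ∨ s.pc t1 = .abortResp)

end TM
namespace TM
variable {T A V : Type} [DecidableEq T] [DecidableEq A] [Zero V]
variable {t0 t1 : T} {x : A} {v1 : V}

set_option maxHeartbeats 1000000 in
lemma silent0 (hne : t0 ≠ t1) {s s' : NState T A V}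
    (hst : NStep false s none s') (hI : I0 t0 t1 x v1 s) : I0 t0 t1 x v1 s' := by
  obtain ⟨⟨hC, hw1, hr0⟩, hm, hw0, hr1, hp0, hp1⟩ := hI
  cases hst <;> rename T => t <;>
    rcases eq_or_ne t t0 with rfl|h0 <;> rcases eq_or_ne t t1 with rfl|h1 <;>
    first
      | exact absurd rfl hne
      | simp_all [I0, Cmn, Function.update_apply, ne_comm]
      | (have := hC t h0 h1; simp_all)

set_option maxHeartbeats 1000000 in
lemma silent1 (hne : t0 ≠ t1) {s s' : NState T A V}
    (hst : NStep false s none s') (hI : I1 t0 t1 x v1 s) : I1 t0 t1 x v1 s' := by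
  obtain ⟨⟨hC, hw1, hr0⟩, hm, hw0, hr1, hp0, hp1⟩ := hI
  cases hst <;> rename T => t <;>
    rcases eq_or_ne t t0 with rfl|h0 <;> rcases eq_or_ne t t1 with rfl|h1 <;>
    first
      | exact absurd rfl hne
      | simp_all [I1, Cmn, Function.update_apply, ne_comm]
      | (have := hC t h0 h1; simp_all)

set_option maxHeartbeats 1000000 in
lemma silent2 (hne : t0 ≠ t1) {s s' : NState T A V}
    (hst : NStep false s none s') (hI : I2 t0 t1 x v1 s) : I2 t0 t1 x v1 s' := by
  obtain ⟨⟨hC, hw1, hr0⟩, hm, hw0, hr1, hp0, hp1⟩ := hI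
  cases hst <;> rename T => t <;>
    rcases eq_or_ne t t0 with rfl|h0 <;> rcases eq_or_ne t t1 with rfl|h1 <;>
    first
      | exact absurd rfl hne
      | simp_all [I2, Cmn, Function.update_apply, ne_comm]
      | (have := hC t h0 h1; simp_all)

set_option maxHeartbeats 1000000 in
lemma silent3 (hne : t0 ≠ t1) {s s' : NState T A V}
    (hst : NStep false s none s') (hI : I3 t0 t1 x v1 s) : I3 t0 t1 x v1 s' := by
  obtain ⟨⟨hC, hw1, hr0⟩, hm, hr1, hp1, hd⟩ := hI
  cases hst <;> rename T => t <;>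
    rcases eq_or_ne t t0 with rfl|h0 <;> rcases eq_or_ne t t1 with rfl|h1 <;>
    rcases hd with ⟨hp0, hw0⟩|⟨hp0, hw0⟩ <;>
    first
      | exact absurd rfl hne
      | simp_all [I3, Cmn, Wm, Function.update_apply, ne_comm]
      | (have := hC t h0 h1; simp_all)

set_option maxHeartbeats 1000000 in
lemma silent4 (hne : t0 ≠ t1) {s s' : NState T A V}
    (hst : NStep false s none s') (hI : I4 t0 t1 x v1 s) : I4 t0 t1 x v1 s' := by
  obtain ⟨⟨hC, hw1, hr0⟩, hm, hr1, hp1, hp0, hw0⟩ := hI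
  cases hst <;> rename T => t <;>
    rcases eq_or_ne t t0 with rfl|h0 <;> rcases eq_or_ne t t1 with rfl|h1 <;>
    first
      | exact absurd rfl hne
      | simp_all [I4, Cmn, Wm, Function.update_apply, ne_comm]
      | (have := hC t h0 h1; simp_all)

set_option maxHeartbeats 1000000 in
lemma silent5 (hne : t0 ≠ t1) {s s' : NState T A V}
    (hst : NStep false s none s') (hI : I5 t0 t1 x v1 s) : I5 t0 t1 x v1 s' := by
  obtain ⟨⟨hC, hw1, hr0⟩, hr1, hp1, hw0, hd⟩ := hI
  have hag0 : Agrees (s.rdSet t0) s.mem := hr0 ▸ agrees_empty _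
  have hwx : s.wrSet t0 x = some v1 := by rw [hw0]; simp [Wm, Function.update_apply, ne_comm]
  cases hst <;> rename T => t <;>
    rcases eq_or_ne t t0 with rfl|h0 <;> rcases eq_or_ne t t1 with rfl|h1 <;>
    rcases hd with ⟨hp0, hmem⟩|⟨hp0, hmem⟩ <;>
    first
      | exact absurd rfl hne
      | simp_all [I5, Cmn, D5, Wm, Function.update_apply, ne_comm]
      | (have := hC t h0 h1; simp_all)

set_option maxHeartbeats 1000000 in
lemma silent6 (hne : t0 ≠ t1) {s s' : NState T A V}
    (hst : NStep false s none s') (hI : I6 t0 t1 x v1 s) : I6 t0 t1 x v1 s' := by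
  obtain ⟨⟨hC, hw1, hr0⟩, hr1, hp1, hw0, hd⟩ := hI
  have hag0 : Agrees (s.rdSet t0) s.mem := hr0 ▸ agrees_empty _
  have hwx : s.wrSet t0 x = some v1 := by rw [hw0]; simp [Wm, Function.update_apply, ne_comm]
  cases hst <;> rename T => t <;>
    rcases eq_or_ne t t0 with rfl|h0 <;> rcases eq_or_ne t t1 with rfl|h1 <;>
    rcases hd with ⟨hp0, hmem⟩|⟨hp0, hmem⟩ <;>
    first
      | exact absurd rfl hne
      | simp_all [I6, Cmn, D5, Wm, Function.update_apply, ne_comm]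
      | (have := hC t h0 h1; simp_all)

set_option maxHeartbeats 1000000 in
lemma silent7 (hne : t0 ≠ t1) {s s' : NState T A V}
    (hst : NStep false s none s') (hI : I7 t0 t1 x v1 s) : I7 t0 t1 x v1 s' := by
  obtain ⟨⟨hC, hw1, hr0⟩, hr1, hp1, hw0, hd⟩ := hI
  have hag0 : Agrees (s.rdSet t0) s.mem := hr0 ▸ agrees_empty _
  have hwx : s.wrSet t0 x = some v1 := by rw [hw0]; simp [Wm, Function.update_apply, ne_comm]
  cases hst <;> rename T => t <;>
    rcases eq_or_ne t t0 with rfl|h0 <;> rcases eq_or_ne t t1 with rfl|h1 <;>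
    rcases hd with ⟨hp0, hmem⟩|⟨hp0, hmem⟩ <;>
    first
      | exact absurd rfl hne
      | simp_all [I7, Cmn, D5, Wm, Function.update_apply, ne_comm]
      | (have := hC t h0 h1; simp_all)

set_option maxHeartbeats 1000000 in
lemma silent8 (hne : t0 ≠ t1) {s s' : NState T A V}
    (hst : NStep false s none s') (hI : I8 t0 t1 x v1 s) : I8 t0 t1 x v1 s' := by
  obtain ⟨⟨hC, hw1, hr0⟩, hw0, hd⟩ := hI
  have hag0 : Agrees (s.rdSet t0) s.mem := hr0 ▸ agrees_empty _
  have hwx : s.wrSet t0 x = some v1 := by rw [hw0]; simp [Wm, Function.update_apply, ne_comm]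
  cases hst <;> rename T => t <;>
    rcases eq_or_ne t t0 with rfl|h0 <;> rcases eq_or_ne t t1 with rfl|h1 <;>
    rcases hd with ⟨hp0, hmem, ⟨hpc1, hrr1⟩|⟨hpc1, hrr1⟩⟩|⟨hp0, hmem, ⟨hpc1, hrr1⟩|⟨hpc1, hrr1⟩|⟨hpc1, hrr1⟩⟩ <;>
    first
      | exact absurd rfl hne
      | simp_all [I8, Cmn, Wm, R0m, Function.update_apply, agrees_empty, ne_comm]
      | (have := hC t h0 h1; simp_all)

set_option maxHeartbeats 1000000 in
lemma silent9 (hne : t0 ≠ t1) {s s' : NState T A V}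
    (hst : NStep false s none s') (hI : I9 t0 t1 x v1 s) : I9 t0 t1 x v1 s' := by
  obtain ⟨⟨hC, hw1, hr0⟩, hw0, hp0, hmem, hd1⟩ := hI
  cases hst <;> rename T => t <;>
    rcases eq_or_ne t t0 with rfl|h0 <;> rcases eq_or_ne t t1 with rfl|h1 <;>
    rcases hd1 with ⟨hpc1, hrr1⟩|⟨hpc1, hrr1⟩|⟨hpc1, hrr1⟩ <;>
    first
      | exact absurd rfl hne
      | simp_all [I9, Cmn, Wm, R0m, Function.update_apply, agrees_empty, ne_comm]
      | (have := hC t h0 h1; simp_all)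

set_option maxHeartbeats 1000000 in
lemma silent10 (hne : t0 ≠ t1) {s s' : NState T A V}
    (hst : NStep false s none s') (hI : I10 t0 t1 x v1 s) : I10 t0 t1 x v1 s' := by
  obtain ⟨⟨hC, hw1, hr0⟩, hp0, hmem, hp1, hr1⟩ := hI
  cases hst <;> rename T => t <;>
    rcases eq_or_ne t t0 with rfl|h0 <;> rcases eq_or_ne t t1 with rfl|h1 <;>
    first
      | exact absurd rfl hne
      | simp_all [I10, Cmn, R0m, Function.update_apply, ne_comm]
      | (have := hC t h0 h1; simp_all)

set_option maxHeartbeats 1000000 in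
lemma silent11 (hne : t0 ≠ t1) (hv : (0:V) ≠ v1) {s s' : NState T A V}
    (hst : NStep false s none s') (hI : I11 t0 t1 x v1 s) : I11 t0 t1 x v1 s' := by
  obtain ⟨⟨hC, hw1, hr0⟩, hp0, hmem, hr1, hd⟩ := hI
  have hrx : s.rdSet t1 x = some 0 := by rw [hr1]; simp [R0m, Function.update_apply, ne_comm]
  cases hst <;> rename T => t <;>
    rcases eq_or_ne t t0 with rfl|h0 <;> rcases eq_or_ne t t1 with rfl|h1 <;>
    first
      | exact absurd rfl hne
      | (rename Agrees _ _ => hag; exact absurd (hag x 0 hrx) (by rw [hmem]; exact fun h => hv h.symm))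
      | simp_all [I11, Cmn, R0m, Function.update_apply, ne_comm]
      | (have := hC t h0 h1; simp_all)

end TM
namespace TM
variable {T A V : Type} [DecidableEq T] [DecidableEq A] [Zero V]
variable {t0 t1 : T} {x : A} {v1 : V}

set_option maxHeartbeats 1000000 in
lemma emit1 (hne : t0 ≠ t1) {s s' : NState T A V}
    (hst : NStep false s (some (.invBegin t0)) s') (hI : I0 t0 t1 x v1 s) :
    I1 t0 t1 x v1 s' := by
  obtain ⟨⟨hC, hw1, hr0⟩, hm, hw0, hr1, hp0, hp1⟩ := hI
  cases hst <;> simp_all [I1, Cmn, Function.update_apply, ne_comm]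

set_option maxHeartbeats 1000000 in
lemma emit2 (hne : t0 ≠ t1) {s s' : NState T A V}
    (hst : NStep false s (some (.respBegin t0)) s') (hI : I1 t0 t1 x v1 s) :
    I2 t0 t1 x v1 s' := by
  obtain ⟨⟨hC, hw1, hr0⟩, hm, hw0, hr1, hp0|hp0, hp1⟩ := hI <;>
  cases hst <;> simp_all [I2, Cmn, Function.update_apply, ne_comm]

set_option maxHeartbeats 1000000 in
lemma emit3 (hne : t0 ≠ t1) {s s' : NState T A V}
    (hst : NStep false s (some (.invWrite t0 x v1)) s') (hI : I2 t0 t1 x v1 s) :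
    I3 t0 t1 x v1 s' := by
  obtain ⟨⟨hC, hw1, hr0⟩, hm, hw0, hr1, hp0, hp1⟩ := hI
  cases hst <;> simp_all [I3, Cmn, Function.update_apply, ne_comm]

set_option maxHeartbeats 1000000 in
lemma emit4 (hne : t0 ≠ t1) {s s' : NState T A V}
    (hst : NStep false s (some (.respWrite t0)) s') (hI : I3 t0 t1 x v1 s) :
    I4 t0 t1 x v1 s' := by
  obtain ⟨⟨hC, hw1, hr0⟩, hm, hr1, hp1, ⟨hp0, hw0⟩|⟨hp0, hw0⟩⟩ := hI <;>
  cases hst <;> simp_all [I4, Cmn, Function.update_apply, ne_comm]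

set_option maxHeartbeats 1000000 in
lemma emit5 (hne : t0 ≠ t1) {s s' : NState T A V}
    (hst : NStep false s (some (.invCommit t0)) s') (hI : I4 t0 t1 x v1 s) :
    I5 t0 t1 x v1 s' := by
  obtain ⟨⟨hC, hw1, hr0⟩, hm, hr1, hp1, hp0, hw0⟩ := hI
  cases hst <;> simp_all [I5, Cmn, D5, Function.update_apply, ne_comm]

set_option maxHeartbeats 1000000 in
lemma emit6 (hne : t0 ≠ t1) {s s' : NState T A V}
    (hst : NStep false s (some (.invBegin t1)) s') (hI : I5 t0 t1 x v1 s) :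
    I6 t0 t1 x v1 s' := by
  obtain ⟨⟨hC, hw1, hr0⟩, hr1, hp1, hw0, hd⟩ := hI
  rcases hd with ⟨hp0, hmem⟩|⟨hp0, hmem⟩ <;>
  cases hst <;> simp_all [I6, Cmn, D5, Function.update_apply, ne_comm]

set_option maxHeartbeats 1000000 in
lemma emit7 (hne : t0 ≠ t1) {s s' : NState T A V}
    (hst : NStep false s (some (.respBegin t1)) s') (hI : I6 t0 t1 x v1 s) :
    I7 t0 t1 x v1 s' := by
  obtain ⟨⟨hC, hw1, hr0⟩, hr1, hp1|hp1, hw0, hd⟩ := hI <;>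
  rcases hd with ⟨hp0, hmem⟩|⟨hp0, hmem⟩ <;>
  cases hst <;> simp_all [I7, Cmn, D5, Function.update_apply, ne_comm]

set_option maxHeartbeats 1000000 in
lemma emit8 (hne : t0 ≠ t1) {s s' : NState T A V}
    (hst : NStep false s (some (.invRead t1 x)) s') (hI : I7 t0 t1 x v1 s) :
    I8 t0 t1 x v1 s' := by
  obtain ⟨⟨hC, hw1, hr0⟩, hr1, hp1, hw0, hd⟩ := hI
  rcases hd with ⟨hp0, hmem⟩|⟨hp0, hmem⟩ <;>
  cases hst <;> simp_all [I8, Cmn, Function.update_apply, ne_comm]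

set_option maxHeartbeats 1000000 in
lemma emit9 (hne : t0 ≠ t1) {s s' : NState T A V}
    (hst : NStep false s (some (.respCommit t0)) s') (hI : I8 t0 t1 x v1 s) :
    I9 t0 t1 x v1 s' := by
  obtain ⟨⟨hC, hw1, hr0⟩, hw0, hd⟩ := hI
  rcases hd with ⟨hp0, hmem, ⟨hpc1, hrr1⟩|⟨hpc1, hrr1⟩⟩|⟨hp0, hmem, ⟨hpc1, hrr1⟩|⟨hpc1, hrr1⟩|⟨hpc1, hrr1⟩⟩ <;>
  cases hst <;> simp_all [I9, Cmn, Function.update_apply, ne_comm]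

set_option maxHeartbeats 1000000 in
lemma emit10 (hne : t0 ≠ t1) (hv : (0:V) ≠ v1) {s s' : NState T A V}
    (hst : NStep false s (some (.respRead t1 (0:V))) s') (hI : I9 t0 t1 x v1 s) :
    I10 t0 t1 x v1 s' := by
  obtain ⟨⟨hC, hw1, hr0⟩, hw0, hp0, hmem, hd⟩ := hI
  cases hst
  rename_i hpc
  rcases hd with ⟨hpc1, hrr1⟩|⟨hpc1, hrr1⟩|⟨hpc1, hrr1⟩
  · rw [hpc1] at hpc; cases hpc
  · rw [hpc1] at hpc; injection hpc with h; exact absurd h.symm hv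
  · exact ⟨⟨fun t h0 h1 => by
        simpa [Function.update_apply, h1] using hC t h0 h1, hw1, hr0⟩,
      by simpa [Function.update_apply, hne] using hp0, hmem,
      by simp [Function.update_apply], hrr1⟩

set_option maxHeartbeats 1000000 in
lemma emit11 (hne : t0 ≠ t1) {s s' : NState T A V}
    (hst : NStep false s (some (.invRead t1 x)) s') (hI : I10 t0 t1 x v1 s) :
    I11 t0 t1 x v1 s' := by
  obtain ⟨⟨hC, hw1, hr0⟩, hp0, hmem, hp1, hr1⟩ := hI
  cases hst <;> simp_all [I11, Cmn, Function.update_apply, ne_comm]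

set_option maxHeartbeats 1000000 in
lemma emit12 (hne : t0 ≠ t1) {s s' : NState T A V}
    (hst : NStep false s (some (.respRead t1 (0:V))) s') (hI : I11 t0 t1 x v1 s) :
    False := by
  obtain ⟨⟨hC, hw1, hr0⟩, hp0, hmem, hr1, hp1|hp1⟩ := hI <;>
  cases hst <;> simp_all

end TM
namespace TM
variable {T A V : Type} [DecidableEq T] [DecidableEq A] [Zero V]

def Q (t0 t1 : T) (x : A) (v1 : V) (h : List (Event T A V)) (s : NState T A V) : Prop :=
  (h = ([] : List (Event T A V)) → I0 t0 t1 x v1 s) ∧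
  (h = ([.invBegin t0] : List (Event T A V)) → I1 t0 t1 x v1 s) ∧
  (h = ([.invBegin t0, .respBegin t0] : List (Event T A V)) → I2 t0 t1 x v1 s) ∧
  (h = ([.invBegin t0, .respBegin t0, .invWrite t0 x v1] : List (Event T A V)) → I3 t0 t1 x v1 s) ∧
  (h = ([.invBegin t0, .respBegin t0, .invWrite t0 x v1, .respWrite t0] : List (Event T A V)) → I4 t0 t1 x v1 s) ∧
  (h = ([.invBegin t0, .respBegin t0, .invWrite t0 x v1, .respWrite t0, .invCommit t0] : List (Event T A V)) → I5 t0 t1 x v1 s) ∧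
  (h = ([.invBegin t0, .respBegin t0, .invWrite t0 x v1, .respWrite t0, .invCommit t0, .invBegin t1] : List (Event T A V)) → I6 t0 t1 x v1 s) ∧
  (h = ([.invBegin t0, .respBegin t0, .invWrite t0 x v1, .respWrite t0, .invCommit t0, .invBegin t1, .respBegin t1] : List (Event T A V)) → I7 t0 t1 x v1 s) ∧
  (h = ([.invBegin t0, .respBegin t0, .invWrite t0 x v1, .respWrite t0, .invCommit t0, .invBegin t1, .respBegin t1, .invRead t1 x] : List (Event T A V)) → I8 t0 t1 x v1 s) ∧
  (h = ([.invBegin t0, .respBegin t0, .invWrite t0 x v1, .respWrite t0, .invCommit t0, .invBegin t1, .respBegin t1, .invRead t1 x, .respCommit t0] : List (Event T A V)) → I9 t0 t1 x v1 s) ∧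
  (h = ([.invBegin t0, .respBegin t0, .invWrite t0 x v1, .respWrite t0, .invCommit t0, .invBegin t1, .respBegin t1, .invRead t1 x, .respCommit t0, .respRead t1 (0:V)] : List (Event T A V)) → I10 t0 t1 x v1 s) ∧
  (h = ([.invBegin t0, .respBegin t0, .invWrite t0 x v1, .respWrite t0, .invCommit t0, .invBegin t1, .respBegin t1, .invRead t1 x, .respCommit t0, .respRead t1 (0:V), .invRead t1 x] : List (Event T A V)) → I11 t0 t1 x v1 s) ∧
  (h = ([.invBegin t0, .respBegin t0, .invWrite t0 x v1, .respWrite t0, .invCommit t0, .invBegin t1, .respBegin t1, .invRead t1 x, .respCommit t0, .respRead t1 (0:V), .invRead t1 x, .respRead t1 (0:V)] : List (Event T A V)) → False)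

lemma norec_inv {t0 t1 : T} {x : A} {v1 : V} (hne : t0 ≠ t1) (hv : (0:V) ≠ v1)
    {s : NState T A V} {h : List (Event T A V)}
    (hex : NExec false s h) : Q t0 t1 x v1 h s := by
  induction hex with
  | init s hinit =>
      obtain ⟨hm, hr, hw, hp⟩ := hinit
      refine ⟨fun _ => ⟨⟨fun t _ _ => by rw [hp], by rw [hw], by rw [hr]⟩,
        by rw [hm], by rw [hw], by rw [hr], by rw [hp], by rw [hp]⟩,
        fun hp => (List.cons_ne_nil _ _ hp.symm).elim,
        fun hp => (List.cons_ne_nil _ _ hp.symm).elim,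
        fun hp => (List.cons_ne_nil _ _ hp.symm).elim,
        fun hp => (List.cons_ne_nil _ _ hp.symm).elim,
        fun hp => (List.cons_ne_nil _ _ hp.symm).elim,
        fun hp => (List.cons_ne_nil _ _ hp.symm).elim,
        fun hp => (List.cons_ne_nil _ _ hp.symm).elim,
        fun hp => (List.cons_ne_nil _ _ hp.symm).elim,
        fun hp => (List.cons_ne_nil _ _ hp.symm).elim,
        fun hp => (List.cons_ne_nil _ _ hp.symm).elim,
        fun hp => (List.cons_ne_nil _ _ hp.symm).elim,
        fun hp => List.cons_ne_nil _ _ hp.symm⟩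
  | silent s h s' hex hst ih =>
      obtain ⟨q0, q1, q2, q3, q4, q5, q6, q7, q8, q9, q10, q11, q12⟩ := ih
      exact ⟨fun hp => silent0 hne hst (q0 hp), fun hp => silent1 hne hst (q1 hp),
        fun hp => silent2 hne hst (q2 hp), fun hp => silent3 hne hst (q3 hp),
        fun hp => silent4 hne hst (q4 hp), fun hp => silent5 hne hst (q5 hp),
        fun hp => silent6 hne hst (q6 hp), fun hp => silent7 hne hst (q7 hp),
        fun hp => silent8 hne hst (q8 hp), fun hp => silent9 hne hst (q9 hp),
        fun hp => silent10 hne hst (q10 hp), fun hp => silent11 hne hv hst (q11 hp), q12⟩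
  | emit s h e s' hex hst ih =>
      obtain ⟨q0, q1, q2, q3, q4, q5, q6, q7, q8, q9, q10, q11, q12⟩ := ih
      refine ⟨fun hp => by simp at hp, ?g1, ?g2, ?g3, ?g4, ?g5, ?g6, ?g7, ?g8, ?g9, ?g10, ?g11, ?g12⟩
      case g1 =>
        intro hp
        have key : h.concat e = ([] : List (Event T A V)).concat (.invBegin t0) := by
          rw [List.concat_eq_append, List.concat_eq_append]; exact hp
        obtain ⟨rfl, rfl⟩ := List.concat_inj.mp key
        exact emit1 hne hst (q0 rfl)
      case g2 =>
        intro hp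
        have key : h.concat e = ([.invBegin t0] : List (Event T A V)).concat (.respBegin t0) := by
          rw [List.concat_eq_append, List.concat_eq_append]; exact hp
        obtain ⟨rfl, rfl⟩ := List.concat_inj.mp key
        exact emit2 hne hst (q1 rfl)
      case g3 =>
        intro hp
        have key : h.concat e = ([.invBegin t0, .respBegin t0] : List (Event T A V)).concat (.invWrite t0 x v1) := by
          rw [List.concat_eq_append, List.concat_eq_append]; exact hp
        obtain ⟨rfl, rfl⟩ := List.concat_inj.mp key
        exact emit3 hne hst (q2 rfl)
      case g4 =>
        intro hp
        have key : h.concat e = ([.invBegin t0, .respBegin t0, .invWrite t0 x v1] : List (Event T A V)).concat (.respWrite t0) := by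
          rw [List.concat_eq_append, List.concat_eq_append]; exact hp
        obtain ⟨rfl, rfl⟩ := List.concat_inj.mp key
        exact emit4 hne hst (q3 rfl)
      case g5 =>
        intro hp
        have key : h.concat e = ([.invBegin t0, .respBegin t0, .invWrite t0 x v1, .respWrite t0] : List (Event T A V)).concat (.invCommit t0) := by
          rw [List.concat_eq_append, List.concat_eq_append]; exact hp
        obtain ⟨rfl, rfl⟩ := List.concat_inj.mp key
        exact emit5 hne hst (q4 rfl)
      case g6 =>
        intro hp
        have key : h.concat e = ([.invBegin t0, .respBegin t0, .invWrite t0 x v1, .respWrite t0, .invCommit t0] : List (Event T A V)).concat (.invBegin t1) := by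
          rw [List.concat_eq_append, List.concat_eq_append]; exact hp
        obtain ⟨rfl, rfl⟩ := List.concat_inj.mp key
        exact emit6 hne hst (q5 rfl)
      case g7 =>
        intro hp
        have key : h.concat e = ([.invBegin t0, .respBegin t0, .invWrite t0 x v1, .respWrite t0, .invCommit t0, .invBegin t1] : List (Event T A V)).concat (.respBegin t1) := by
          rw [List.concat_eq_append, List.concat_eq_append]; exact hp
        obtain ⟨rfl, rfl⟩ := List.concat_inj.mp key
        exact emit7 hne hst (q6 rfl)
      case g8 =>
        intro hp
        have key : h.concat e = ([.invBegin t0, .respBegin t0, .invWrite t0 x v1, .respWrite t0, .invCommit t0, .invBegin t1, .respBegin t1] : List (Event T A V)).concat (.invRead t1 x) := by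
          rw [List.concat_eq_append, List.concat_eq_append]; exact hp
        obtain ⟨rfl, rfl⟩ := List.concat_inj.mp key
        exact emit8 hne hst (q7 rfl)
      case g9 =>
        intro hp
        have key : h.concat e = ([.invBegin t0, .respBegin t0, .invWrite t0 x v1, .respWrite t0, .invCommit t0, .invBegin t1, .respBegin t1, .invRead t1 x] : List (Event T A V)).concat (.respCommit t0) := by
          rw [List.concat_eq_append, List.concat_eq_append]; exact hp
        obtain ⟨rfl, rfl⟩ := List.concat_inj.mp key
        exact emit9 hne hst (q8 rfl)
      case g10 =>
        intro hp
        have key : h.concat e = ([.invBegin t0, .respBegin t0, .invWrite t0 x v1, .respWrite t0, .invCommit t0, .invBegin t1, .respBegin t1, .invRead t1 x, .respCommit t0] : List (Event T A V)).concat (.respRead t1 (0:V)) := by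
          rw [List.concat_eq_append, List.concat_eq_append]; exact hp
        obtain ⟨rfl, rfl⟩ := List.concat_inj.mp key
        exact emit10 hne hv hst (q9 rfl)
      case g11 =>
        intro hp
        have key : h.concat e = ([.invBegin t0, .respBegin t0, .invWrite t0 x v1, .respWrite t0, .invCommit t0, .invBegin t1, .respBegin t1, .invRead t1 x, .respCommit t0, .respRead t1 (0:V)] : List (Event T A V)).concat (.invRead t1 x) := by
          rw [List.concat_eq_append, List.concat_eq_append]; exact hp
        obtain ⟨rfl, rfl⟩ := List.concat_inj.mp key
        exact emit11 hne hst (q10 rfl)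
      case g12 =>
        intro hp
        have key : h.concat e = ([.invBegin t0, .respBegin t0, .invWrite t0 x v1, .respWrite t0, .invCommit t0, .invBegin t1, .respBegin t1, .invRead t1 x, .respCommit t0, .respRead t1 (0:V), .invRead t1 x] : List (Event T A V)).concat (.respRead t1 (0:V)) := by
          rw [List.concat_eq_append, List.concat_eq_append]; exact hp
        obtain ⟨rfl, rfl⟩ := List.concat_inj.mp key
        exact emit12 hne hst (q11 rfl)

end TM
/-- The history `h4` is a history of RO-NORec-CGA but not of NORec-CGA. -/
theorem h4_separates {T A V : Type}
    [DecidableEq T] [DecidableEq A] [Zero V]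
    (t0 t1 : T) (x : A) (v1 : V) (hne : t0 ≠ t1) (hv : (0 : V) ≠ v1)
    (h4 : List (TM.Event T A V))
    (hh4 : h4 = [.invBegin t0, .respBegin t0, .invWrite t0 x v1, .respWrite t0,
                 .invCommit t0, .invBegin t1, .respBegin t1, .invRead t1 x,
                 .respCommit t0, .respRead t1 (0 : V), .invRead t1 x,
                 .respRead t1 (0 : V)]) :
    h4 ∈ TM.RoNorecHist T A V ∧ h4 ∉ TM.NorecHist T A V := by
  subst hh4
  refine ⟨TM.mem_part t0 t1 x v1 hne, ?_⟩
  rintro ⟨s, hex⟩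
  exact (TM.norec_inv hne hv hex).2.2.2.2.2.2.2.2.2.2.2.2 rfl
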